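/- Under the standing hypotheses, the function Z(t) = (1 + m_s Y_{B/s}/k_d)·X(t) + α·B(t) + α·Y_{B/s}·s(t) is nonnegative and nonincreasing along solutions, hence converges to a finite limit Z∞ ≥ 0 as t → +∞, and consequently X(t), B(t), s(t) are bounded on [0, ∞). -/

import Mathlib

/-- `Z = (1 + m_s Y_{B/s}/k_d) X + α B + α Y_{B/s} s` is nonnegative and
nonincreasing along solutions, hence converges to a finite limit `Z∞ ≥ 0`
as `t → ∞`, and `X`, `B`, `s` are bounded on `[0,∞)`. -/
theorem stmt_9 (μ : ℝ → ℝ) (KH α kd YB ms : ℝ) (X B S : ℝ → ℝ)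
    (hμ : ContDiff ℝ 1 μ) (hμ0 : μ 0 = 0) (hμpos : ∀ x, 0 < x → 0 < μ x)
    (hKH : 0 < KH) (hα0 : 0 < α) (hα1 : α < 1) (hkd : 0 < kd)
    (hYB : 0 < YB) (hYB1 : YB < 1) (hms : 0 < ms)
    (hpos : ∀ t, 0 ≤ t → 0 ≤ X t ∧ 0 ≤ B t ∧ 0 ≤ S t)
    (hODE : ∀ t, 0 ≤ t →
      HasDerivAt X (-KH * X t + α * kd * B t) t ∧
      HasDerivAt B ((μ (S t) - kd) * B t) t ∧
      HasDerivAt S (-(μ (S t) / YB + ms) * B t + KH * X t) t) :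
    (∀ t, 0 ≤ t → 0 ≤ (1 + ms * YB / kd) * X t + α * B t + α * YB * S t) ∧
    (∀ t₁ t₂, 0 ≤ t₁ → t₁ ≤ t₂ →
      (1 + ms * YB / kd) * X t₂ + α * B t₂ + α * YB * S t₂ ≤
        (1 + ms * YB / kd) * X t₁ + α * B t₁ + α * YB * S t₁) ∧
    (∃ Zinf : ℝ, 0 ≤ Zinf ∧
      Filter.Tendsto (fun t => (1 + ms * YB / kd) * X t + α * B t + α * YB * S t)
        Filter.atTop (nhds Zinf)) ∧
    (∃ M : ℝ, ∀ t, 0 ≤ t → X t ≤ M ∧ B t ≤ M ∧ S t ≤ M) := by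
  set c : ℝ := 1 + ms * YB / kd with hc
  have hc1 : 1 ≤ c := by
    rw [hc]
    have : 0 ≤ ms * YB / kd := by positivity
    linarith
  set Z : ℝ → ℝ := fun t => c * X t + α * B t + α * YB * S t with hZ
  have hZder : ∀ t, 0 ≤ t → HasDerivAt Z (KH * (α * YB - c) * X t) t := by
    intro t ht
    obtain ⟨hX, hB, hS⟩ := hODE t ht
    have h := ((hX.const_mul c).add (hB.const_mul α)).add (hS.const_mul (α * YB))
    refine h.congr_deriv ?_
    rw [hc]
    field_simp
    ring
  have hZnn : ∀ t, 0 ≤ t → 0 ≤ Z t := by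
    intro t ht
    obtain ⟨h1, h2, h3⟩ := hpos t ht
    have : 0 ≤ c := by linarith
    positivity
  have hanti : AntitoneOn Z (Set.Ici (0:ℝ)) := by
    apply antitoneOn_of_deriv_nonpos (convex_Ici 0)
    · intro x hx
      exact (hZder x hx).continuousAt.continuousWithinAt
    · intro x hx
      rw [interior_Ici] at hx
      exact (hZder x (le_of_lt hx)).differentiableAt.differentiableWithinAt
    · intro x hx
      rw [interior_Ici] at hx
      rw [(hZder x (le_of_lt hx)).deriv]
      have hXx := (hpos x (le_of_lt hx)).1
      have h1 : α * YB - c ≤ 0 := by nlinarith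
      have h2 := mul_nonpos_of_nonneg_of_nonpos (le_of_lt hKH) h1
      exact mul_nonpos_of_nonpos_of_nonneg h2 hXx
  refine ⟨hZnn, fun t₁ t₂ h1 h2 => hanti (Set.mem_Ici.2 h1) (Set.mem_Ici.2 (h1.trans h2)) h2, ?_, ?_⟩
  · set g : ℝ → ℝ := fun t => Z (max t 0) with hg
    have hganti : Antitone g := by
      intro a b hab
      exact hanti (Set.mem_Ici.2 (le_max_right a 0)) (Set.mem_Ici.2 (le_max_right b 0))
        (max_le_max hab le_rfl)
    have hgbdd : BddBelow (Set.range g) := by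
      refine ⟨0, ?_⟩
      rintro _ ⟨t, rfl⟩
      exact hZnn _ (le_max_right t 0)
    have hlim := tendsto_atTop_ciInf hganti hgbdd
    refine ⟨⨅ t, g t, ?_, ?_⟩
    · exact le_ciInf fun t => hZnn _ (le_max_right t 0)
    · apply hlim.congr'
      filter_upwards [Filter.eventually_ge_atTop (0:ℝ)] with t ht
      simp [hg, max_eq_left ht]
  · refine ⟨Z 0 * (1 + 1/α + 1/(α*YB)), fun t ht => ?_⟩
    obtain ⟨h1, h2, h3⟩ := hpos t ht
    have hle : Z t ≤ Z 0 := hanti (Set.mem_Ici.2 le_rfl) (Set.mem_Ici.2 ht) ht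
    have hZ0 : 0 ≤ Z 0 := hZnn 0 le_rfl
    have hZt : c * X t + α * B t + α * YB * S t ≤ Z 0 := hle
    have hαYB : 0 < α * YB := mul_pos hα0 hYB
    refine ⟨?_, ?_, ?_⟩
    · have hX' : X t ≤ Z 0 := by nlinarith
      have h4 : 0 ≤ 1/α + 1/(α*YB) := by positivity
      have h5 : Z 0 ≤ Z 0 * (1 + 1/α + 1/(α*YB)) :=
        le_mul_of_one_le_right hZ0 (by linarith)
      exact hX'.trans h5
    · have hB' : B t ≤ Z 0 / α := by
        rw [le_div_iff₀ hα0]; nlinarith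
      calc B t ≤ Z 0 / α := hB'
        _ = Z 0 * (1/α) := by ring
        _ ≤ Z 0 * (1 + 1/α + 1/(α*YB)) := by
            apply mul_le_mul_of_nonneg_left _ hZ0
            have : 0 ≤ 1/(α*YB) := by positivity
            linarith
    · have hS' : S t ≤ Z 0 / (α * YB) := by
        rw [le_div_iff₀ hαYB]; nlinarith
      calc S t ≤ Z 0 / (α * YB) := hS'
        _ = Z 0 * (1/(α*YB)) := by ring
        _ ≤ Z 0 * (1 + 1/α + 1/(α*YB)) := by
            apply mul_le_mul_of_nonneg_left _ hZ0
            have : 0 ≤ 1/α := by positivity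
            linarith
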